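/- arXiv:2110.08986 — 2 statements merged into one kernel-verified Lean document; each statement's English description precedes it below -/
import Mathlib

section
/- For all X, D ∈ ℝ^{n×p}, setting Y := X + D and J_X(D) := D·A(X) − X·Φ(DᵀX), the exact identity Y·A(Y) = X·A(X) + J_X(D) − D·Φ(DᵀX) − (1/2)·X·(DᵀD) − (1/2)·D·(DᵀD) holds. In particular, ‖Y·A(Y) − X·A(X) − J_X(D)‖_F ≤ (‖Φ(DᵀX)‖_F + (1/2)‖X‖_F·‖D‖_F + (1/2)‖D‖_F²)·‖D‖_F, so J_X is the Fréchet derivative of the map X ↦ X·A(X) at X. -/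
open Matrix

attribute [local instance] Matrix.frobeniusNormedAddCommGroup Matrix.frobeniusNormedSpace

namespace ExPen

noncomputable def finner {n p : ℕ} (A B : Matrix (Fin n) (Fin p) ℝ) : ℝ := (Aᵀ * B).trace

noncomputable def Phi {p : ℕ} (M : Matrix (Fin p) (Fin p) ℝ) : Matrix (Fin p) (Fin p) ℝ :=
  (1 / 2 : ℝ) • (M + Mᵀ)

noncomputable def Amap {n p : ℕ} (X : Matrix (Fin n) (Fin p) ℝ) : Matrix (Fin p) (Fin p) ℝ :=
  (3 / 2 : ℝ) • (1 : Matrix (Fin p) (Fin p) ℝ) - (1 / 2 : ℝ) • (Xᵀ * X)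

noncomputable def g {n p : ℕ} (f : Matrix (Fin n) (Fin p) ℝ → ℝ)
    (X : Matrix (Fin n) (Fin p) ℝ) : ℝ := f (X * Amap X)

noncomputable def hpen {n p : ℕ} (f : Matrix (Fin n) (Fin p) ℝ → ℝ) (β : ℝ)
    (X : Matrix (Fin n) (Fin p) ℝ) : ℝ := g f X + β / 4 * ‖Xᵀ * X - 1‖ ^ 2

noncomputable def dualCLM {n p : ℕ} (G : Matrix (Fin n) (Fin p) ℝ) :
    Matrix (Fin n) (Fin p) ℝ →L[ℝ] ℝ :=
  LinearMap.toContinuousLinearMap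
    { toFun := fun D => (Gᵀ * D).trace
      map_add' := by intro D E; simp [Matrix.mul_add]
      map_smul' := by intro c D; simp [Matrix.mul_smul] }

def HasGradAt {n p : ℕ} (φ : Matrix (Fin n) (Fin p) ℝ → ℝ)
    (X G : Matrix (Fin n) (Fin p) ℝ) : Prop :=
  HasFDerivAt φ (dualCLM G) X

noncomputable def specNorm {n p : ℕ} (X : Matrix (Fin n) (Fin p) ℝ) : ℝ :=
  ‖LinearMap.toContinuousLinearMap
    (Matrix.toEuclideanLin X : EuclideanSpace ℝ (Fin p) →ₗ[ℝ] EuclideanSpace ℝ (Fin n))‖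

lemma posSemidef_tmul {n p : ℕ} (X : Matrix (Fin n) (Fin p) ℝ) : (Xᵀ * X).PosSemidef := by
  simpa [Matrix.conjTranspose_eq_transpose_of_trivial] using
    Matrix.posSemidef_conjTranspose_mul_self X

noncomputable def psdSqrt {m : Type*} [Fintype m] [DecidableEq m] {A : Matrix m m ℝ}
    (hA : A.PosSemidef) : Matrix m m ℝ :=
  hA.1.eigenvectorUnitary.1 * diagonal ((↑) ∘ (√·) ∘ hA.1.eigenvalues) *
    (star hA.1.eigenvectorUnitary : Matrix m m ℝ)

noncomputable def Pst {n p : ℕ} (X : Matrix (Fin n) (Fin p) ℝ) : Matrix (Fin n) (Fin p) ℝ :=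
  X * (psdSqrt (posSemidef_tmul X))⁻¹


open Asymptotics
lemma key {n p : ℕ} (X D : Matrix (Fin n) (Fin p) ℝ) :
    (X + D) * Amap (X + D) =
      X * Amap X + (D * Amap X - X * Phi (Dᵀ * X)) - D * Phi (Dᵀ * X)
        - (1 / 2 : ℝ) • (X * (Dᵀ * D)) - (1 / 2 : ℝ) • (D * (Dᵀ * D)) := by
  simp only [Amap, Phi, Matrix.transpose_add, Matrix.transpose_mul, Matrix.transpose_transpose,
    Matrix.mul_add, Matrix.add_mul, Matrix.mul_sub, Matrix.sub_mul, Matrix.mul_smul,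
    Matrix.smul_mul, smul_add, smul_sub, smul_smul, Matrix.mul_one, Matrix.one_mul,
    Matrix.mul_assoc]
  module

lemma rem_eq {n p : ℕ} (X D : Matrix (Fin n) (Fin p) ℝ) :
    (X + D) * Amap (X + D) - X * Amap X - (D * Amap X - X * Phi (Dᵀ * X)) =
      -(D * Phi (Dᵀ * X) + (1 / 2 : ℝ) • (X * (Dᵀ * D)) + (1 / 2 : ℝ) • (D * (Dᵀ * D))) := by
  rw [key]; abel

lemma rem_norm_le {n p : ℕ} (X D : Matrix (Fin n) (Fin p) ℝ) :
    ‖(X + D) * Amap (X + D) - X * Amap X - (D * Amap X - X * Phi (Dᵀ * X))‖ ≤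
      ‖Phi (Dᵀ * X)‖ * ‖D‖ + 1 / 2 * ‖X‖ * ‖D‖ ^ 2 + 1 / 2 * ‖D‖ ^ 3 := by
  rw [rem_eq, norm_neg]
  have h1 : ‖D * Phi (Dᵀ * X)‖ ≤ ‖D‖ * ‖Phi (Dᵀ * X)‖ := Matrix.frobenius_norm_mul _ _
  have h2 : ‖X * (Dᵀ * D)‖ ≤ ‖X‖ * (‖D‖ * ‖D‖) := by
    calc ‖X * (Dᵀ * D)‖ ≤ ‖X‖ * ‖Dᵀ * D‖ := Matrix.frobenius_norm_mul _ _
      _ ≤ ‖X‖ * (‖Dᵀ‖ * ‖D‖) :=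
          mul_le_mul_of_nonneg_left (Matrix.frobenius_norm_mul _ _) (norm_nonneg _)
      _ = ‖X‖ * (‖D‖ * ‖D‖) := by rw [Matrix.frobenius_norm_transpose]
  have h3 : ‖D * (Dᵀ * D)‖ ≤ ‖D‖ * (‖D‖ * ‖D‖) := by
    calc ‖D * (Dᵀ * D)‖ ≤ ‖D‖ * ‖Dᵀ * D‖ := Matrix.frobenius_norm_mul _ _
      _ ≤ ‖D‖ * (‖Dᵀ‖ * ‖D‖) :=
          mul_le_mul_of_nonneg_left (Matrix.frobenius_norm_mul _ _) (norm_nonneg _)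
      _ = ‖D‖ * (‖D‖ * ‖D‖) := by rw [Matrix.frobenius_norm_transpose]
  calc ‖D * Phi (Dᵀ * X) + (1 / 2 : ℝ) • (X * (Dᵀ * D)) + (1 / 2 : ℝ) • (D * (Dᵀ * D))‖
      ≤ ‖D * Phi (Dᵀ * X)‖ + ‖(1 / 2 : ℝ) • (X * (Dᵀ * D))‖ + ‖(1 / 2 : ℝ) • (D * (Dᵀ * D))‖ :=
        norm_add₃_le
    _ ≤ ‖Phi (Dᵀ * X)‖ * ‖D‖ + 1 / 2 * ‖X‖ * ‖D‖ ^ 2 + 1 / 2 * ‖D‖ ^ 3 := by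
        rw [norm_smul, norm_smul]
        simp only [Real.norm_eq_abs, show |(1/2:ℝ)| = 1/2 by norm_num]
        nlinarith [norm_nonneg D, norm_nonneg X]

lemma phi_norm_le {n p : ℕ} (X D : Matrix (Fin n) (Fin p) ℝ) :
    ‖Phi (Dᵀ * X)‖ ≤ ‖D‖ * ‖X‖ := by
  have h1 : ‖Dᵀ * X‖ ≤ ‖D‖ * ‖X‖ := by
    calc ‖Dᵀ * X‖ ≤ ‖Dᵀ‖ * ‖X‖ := Matrix.frobenius_norm_mul _ _
      _ = ‖D‖ * ‖X‖ := by rw [Matrix.frobenius_norm_transpose]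
  calc ‖Phi (Dᵀ * X)‖ ≤ 1/2 * (‖Dᵀ * X‖ + ‖(Dᵀ * X)ᵀ‖) := by
        rw [Phi, norm_smul]
        simp only [Real.norm_eq_abs, show |(1/2:ℝ)| = 1/2 by norm_num]
        have := norm_add_le (Dᵀ * X) (Dᵀ * X)ᵀ
        linarith
    _ ≤ ‖D‖ * ‖X‖ := by rw [Matrix.frobenius_norm_transpose]; linarith


theorem statement_0 {n p : ℕ} (X D : Matrix (Fin n) (Fin p) ℝ) :
    (X + D) * Amap (X + D) =
      X * Amap X + (D * Amap X - X * Phi (Dᵀ * X)) - D * Phi (Dᵀ * X)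
        - (1 / 2 : ℝ) • (X * (Dᵀ * D)) - (1 / 2 : ℝ) • (D * (Dᵀ * D)) ∧
    ‖(X + D) * Amap (X + D) - X * Amap X - (D * Amap X - X * Phi (Dᵀ * X))‖ ≤
      (‖Phi (Dᵀ * X)‖ + 1 / 2 * ‖X‖ * ‖D‖ + 1 / 2 * ‖D‖ ^ 2) * ‖D‖ ∧
    ∃ J : Matrix (Fin n) (Fin p) ℝ →L[ℝ] Matrix (Fin n) (Fin p) ℝ,
      (∀ E, J E = E * Amap X - X * Phi (Eᵀ * X)) ∧
      HasFDerivAt (fun Z : Matrix (Fin n) (Fin p) ℝ => Z * Amap Z) J X := by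
  refine ⟨key X D, ?_, ?_⟩
  · calc _ ≤ ‖Phi (Dᵀ * X)‖ * ‖D‖ + 1 / 2 * ‖X‖ * ‖D‖ ^ 2 + 1 / 2 * ‖D‖ ^ 3 :=
        rem_norm_le X D
      _ = (‖Phi (Dᵀ * X)‖ + 1 / 2 * ‖X‖ * ‖D‖ + 1 / 2 * ‖D‖ ^ 2) * ‖D‖ := by ring
  · refine ⟨LinearMap.toContinuousLinearMap
      { toFun := fun E => E * Amap X - X * Phi (Eᵀ * X)
        map_add' := by
          intro E F
          simp only [Phi, Matrix.transpose_add, Matrix.transpose_mul, Matrix.add_mul,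
            Matrix.mul_add, smul_add]
          abel
        map_smul' := by
          intro c E
          simp only [Phi, Matrix.transpose_smul, Matrix.transpose_mul, Matrix.smul_mul,
            Matrix.mul_smul, Matrix.mul_add, smul_add, smul_sub, smul_smul, RingHom.id_apply]
          module }, fun E => rfl, ?_⟩
    refine hasFDerivAt_iff_isLittleO_nhds_zero.2 ?_
    have hO : (fun h : Matrix (Fin n) (Fin p) ℝ =>
        (X + h) * Amap (X + h) - X * Amap X - (h * Amap X - X * Phi (hᵀ * X)))
        =O[nhds 0] fun h => ‖h‖ ^ 2 := by
      rw [isBigO_iff]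
      refine ⟨3/2 * ‖X‖ + 1/2, ?_⟩
      filter_upwards [Metric.closedBall_mem_nhds (0 : Matrix (Fin n) (Fin p) ℝ) one_pos] with h hh
      rw [Metric.mem_closedBall, dist_zero_right] at hh
      have hb := rem_norm_le X h
      have hp := phi_norm_le X h
      have h0 := norm_nonneg h
      have h0X := norm_nonneg X
      calc ‖(X + h) * Amap (X + h) - X * Amap X - (h * Amap X - X * Phi (hᵀ * X))‖
          ≤ ‖Phi (hᵀ * X)‖ * ‖h‖ + 1 / 2 * ‖X‖ * ‖h‖ ^ 2 + 1 / 2 * ‖h‖ ^ 3 := hb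
        _ ≤ (3/2 * ‖X‖ + 1/2) * ‖(‖h‖ ^ 2)‖ := by
            rw [Real.norm_eq_abs, abs_of_nonneg (by positivity)]
            nlinarith
    exact hO.trans_isLittleO (isLittleO_norm_pow_id one_lt_two)


end ExPen
end

section
/- Suppose f is twice continuously differentiable. Let X ∈ S_{n,p} and let D ∈ T_X (i.e. Φ(DᵀX) = 0). Then, for any value of the penalty parameter β, the Hessian of h at X satisfies ⟨D, Hh(X)[D]⟩ = ⟨D, Hf(X)[D] − D·Φ(Xᵀ∇f(X))⟩. -/
open Matrix

attribute [local instance] Matrix.frobeniusNormedAddCommGroup Matrix.frobeniusNormedSpace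

namespace ExPenAux

set_option linter.unusedSectionVars false
variable {a b c : Type*} [Fintype a] [Fintype b] [Fintype c]
  [DecidableEq a] [DecidableEq b] [DecidableEq c]

noncomputable def mulLeftCLM (A : Matrix a b ℝ) : Matrix b c ℝ →L[ℝ] Matrix a c ℝ :=
  LinearMap.toContinuousLinearMap
    { toFun := fun B => A * B
      map_add' := by intros; simp [Matrix.mul_add]
      map_smul' := by intros; simp [Matrix.mul_smul] }

noncomputable def mulRightCLM (B : Matrix b c ℝ) : Matrix a b ℝ →L[ℝ] Matrix a c ℝ :=
  LinearMap.toContinuousLinearMap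
    { toFun := fun A => A * B
      map_add' := by intros; simp [Matrix.add_mul]
      map_smul' := by intros; simp [Matrix.smul_mul] }

noncomputable def tCLM : Matrix a b ℝ →L[ℝ] Matrix b a ℝ :=
  LinearMap.toContinuousLinearMap
    { toFun := fun A => Aᵀ
      map_add' := by intros; simp [Matrix.transpose_add]
      map_smul' := by intros; simp [Matrix.transpose_smul] }

noncomputable def trCLM : Matrix a a ℝ →L[ℝ] ℝ :=
  LinearMap.toContinuousLinearMap (Matrix.traceLinearMap a ℝ ℝ)

@[simp] lemma mulLeftCLM_apply (A : Matrix a b ℝ) (B : Matrix b c ℝ) :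
    (mulLeftCLM (c := c) A) B = A * B := rfl
@[simp] lemma mulRightCLM_apply (B : Matrix b c ℝ) (A : Matrix a b ℝ) :
    (mulRightCLM (a := a) B) A = A * B := rfl
@[simp] lemma tCLM_apply (A : Matrix a b ℝ) : tCLM A = Aᵀ := rfl
@[simp] lemma trCLM_apply (A : Matrix a a ℝ) : trCLM A = A.trace := rfl

lemma isBoundedBilinearMap_mul :
    IsBoundedBilinearMap ℝ (fun q : Matrix a b ℝ × Matrix b c ℝ => q.1 * q.2) where
  add_left := by intros; simp [Matrix.add_mul]
  smul_left := by intros; simp [Matrix.smul_mul]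
  add_right := by intros; simp [Matrix.mul_add]
  smul_right := by intros; simp [Matrix.mul_smul]
  bound := ⟨1, one_pos, fun A B => by
    simpa using Matrix.frobenius_norm_mul A B⟩

variable {E : Type*} [NormedAddCommGroup E] [NormedSpace ℝ E]

lemma HasFDerivAt.matmul {φ : E → Matrix a b ℝ} {ψ : E → Matrix b c ℝ}
    {φ' : E →L[ℝ] Matrix a b ℝ} {ψ' : E →L[ℝ] Matrix b c ℝ} {x : E}
    (hφ : HasFDerivAt φ φ' x) (hψ : HasFDerivAt ψ ψ' x) :
    HasFDerivAt (fun y => φ y * ψ y)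
      ((mulLeftCLM (φ x)).comp ψ' + (mulRightCLM (ψ x)).comp φ') x := by
  have hb := isBoundedBilinearMap_mul (a := a) (b := b) (c := c)
  have h := (hb.hasFDerivAt (φ x, ψ x)).comp x (hφ.prodMk hψ)
  exact h



lemma HasFDerivAt.mtrans {φ : E → Matrix a b ℝ} {φ' : E →L[ℝ] Matrix a b ℝ} {x : E}
    (hφ : HasFDerivAt φ φ' x) :
    HasFDerivAt (fun y => (φ y)ᵀ) ((tCLM (a := a) (b := b)).comp φ') x :=
  (tCLM (a := a) (b := b)).hasFDerivAt.comp x hφ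

end ExPenAux

open ExPenAux

namespace ExPen

@[simp] lemma dualCLM_apply {n p : ℕ} (G D : Matrix (Fin n) (Fin p) ℝ) :
    dualCLM G D = (Gᵀ * D).trace := rfl

lemma tr_t {q p : ℕ} (A B : Matrix (Fin q) (Fin p) ℝ) :
    (Aᵀ * B).trace = (Bᵀ * A).trace := by
  rw [← Matrix.trace_transpose (Aᵀ * B), Matrix.transpose_mul, Matrix.transpose_transpose]

lemma rot4 {a b c d : Type*} [Fintype a] [Fintype b] [Fintype c] [Fintype d]
    (A : Matrix a b ℝ) (B : Matrix b c ℝ) (C : Matrix c d ℝ) (D : Matrix d a ℝ) :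
    (A * (B * (C * D))).trace = (B * (C * (D * A))).trace := by
  rw [Matrix.trace_mul_comm]; simp only [Matrix.mul_assoc]

lemma transp4 {a b c d : Type*} [Fintype a] [Fintype b] [Fintype c] [Fintype d]
    (A : Matrix a b ℝ) (B : Matrix b c ℝ) (C : Matrix c d ℝ) (D : Matrix d a ℝ) :
    (A * (B * (C * D))).trace = (Dᵀ * (Cᵀ * (Bᵀ * Aᵀ))).trace := by
  rw [← Matrix.trace_transpose]; simp only [Matrix.transpose_mul, Matrix.mul_assoc]

lemma rot3 {a b c : Type*} [Fintype a] [Fintype b] [Fintype c]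
    (A : Matrix a b ℝ) (B : Matrix b c ℝ) (C : Matrix c a ℝ) :
    (A * (B * C)).trace = (B * (C * A)).trace := by
  rw [Matrix.trace_mul_comm]; simp only [Matrix.mul_assoc]

lemma transp3 {a b c : Type*} [Fintype a] [Fintype b] [Fintype c]
    (A : Matrix a b ℝ) (B : Matrix b c ℝ) (C : Matrix c a ℝ) :
    (A * (B * C)).trace = (Cᵀ * (Bᵀ * Aᵀ)).trace := by
  rw [← Matrix.trace_transpose]; simp only [Matrix.transpose_mul, Matrix.mul_assoc]

lemma sq_norm {q p : ℕ} (M : Matrix (Fin q) (Fin p) ℝ) : ‖M‖ ^ 2 = (Mᵀ * M).trace := by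
  have h1 : ‖M‖ ^ 2 = ∑ i, ∑ j, ‖M i j‖ ^ 2 := by
    rw [Matrix.frobenius_norm_def, ← Real.rpow_natCast _ 2, ← Real.rpow_mul (by positivity)]
    norm_num
  rw [h1, Matrix.trace]
  simp [Matrix.diag, Matrix.mul_apply, Real.norm_eq_abs, sq_abs]
  rw [Finset.sum_comm]
  simp [pow_two]

lemma dual_add {n p : ℕ} (A B : Matrix (Fin n) (Fin p) ℝ) :
    dualCLM (A + B) = dualCLM A + dualCLM B := by
  ext C
  simp [Matrix.transpose_add, Matrix.add_mul, Matrix.trace_add]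

lemma dual_inj {n p : ℕ} {G G' : Matrix (Fin n) (Fin p) ℝ}
    (h : dualCLM G = dualCLM G') : G = G' := by
  ext i j
  have := congrArg (fun L : Matrix (Fin n) (Fin p) ℝ →L[ℝ] ℝ => L (Matrix.single i j 1)) h
  simp only [dualCLM_apply] at this
  simpa [Matrix.trace, Matrix.diag, Matrix.mul_apply, Matrix.single, Matrix.of_apply,
    ite_and] using this

lemma pen_grad {n p : ℕ} (β : ℝ) (Y : Matrix (Fin n) (Fin p) ℝ) :
    HasFDerivAt (fun Z : Matrix (Fin n) (Fin p) ℝ => β / 4 * ‖Zᵀ * Z - 1‖ ^ 2)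
      (dualCLM (β • (Y * (Yᵀ * Y - 1)))) Y := by
  have hid : HasFDerivAt (fun Z : Matrix (Fin n) (Fin p) ℝ => Z)
      (ContinuousLinearMap.id ℝ _) Y := hasFDerivAt_id Y
  have hR : HasFDerivAt (fun Z : Matrix (Fin n) (Fin p) ℝ => Zᵀ * Z - 1) _ Y :=
    (HasFDerivAt.matmul (HasFDerivAt.mtrans hid) hid).sub_const 1
  have h2 : HasFDerivAt
      (fun Z : Matrix (Fin n) (Fin p) ℝ => (Zᵀ * Z - 1)ᵀ * (Zᵀ * Z - 1)) _ Y :=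
    HasFDerivAt.matmul (HasFDerivAt.mtrans hR) hR
  have hfun : (fun Z : Matrix (Fin n) (Fin p) ℝ => β / 4 * ‖Zᵀ * Z - 1‖ ^ 2)
      = fun Z : Matrix (Fin n) (Fin p) ℝ =>
        β / 4 * ((Zᵀ * Z - 1)ᵀ * (Zᵀ * Z - 1)).trace := by
    funext Z; rw [sq_norm]
  rw [hfun]
  refine HasFDerivAt.congr_fderiv (((trCLM.hasFDerivAt).comp Y h2).const_mul (β / 4)) ?_
  ext C
  change β / 4 * ((Yᵀ * Y - 1)ᵀ * (Yᵀ * C + Cᵀ * Y) + (Yᵀ * C + Cᵀ * Y)ᵀ * (Yᵀ * Y - 1)).trace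
    = ((β • (Y * (Yᵀ * Y - 1)))ᵀ * C).trace
  have hRs : (Yᵀ * Y - 1)ᵀ = Yᵀ * Y - 1 := by
    rw [Matrix.transpose_sub, Matrix.transpose_mul, Matrix.transpose_transpose,
      Matrix.transpose_one]
  simp only [hRs, Matrix.transpose_add, Matrix.transpose_mul, Matrix.transpose_transpose,
    Matrix.mul_add, Matrix.add_mul, Matrix.trace_add, Matrix.transpose_smul, Matrix.smul_mul,
    Matrix.trace_smul, smul_eq_mul]
  have e1 : ((Yᵀ * Y - 1) * (Cᵀ * Y)).trace = ((Yᵀ * Y - 1) * (Yᵀ * C)).trace := by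
    rw [← Matrix.trace_transpose ((Yᵀ * Y - 1) * (Cᵀ * Y)), Matrix.transpose_mul,
      Matrix.transpose_mul, Matrix.transpose_transpose, hRs, Matrix.trace_mul_comm]
  have e2 : (Cᵀ * Y * (Yᵀ * Y - 1)).trace = ((Yᵀ * Y - 1) * (Yᵀ * C)).trace := by
    rw [Matrix.trace_mul_comm, ← e1]
  have e3 : (Yᵀ * C * (Yᵀ * Y - 1)).trace = ((Yᵀ * Y - 1) * (Yᵀ * C)).trace :=
    Matrix.trace_mul_comm _ _
  have e4 : ((Yᵀ * Y - 1) * Yᵀ * C).trace = ((Yᵀ * Y - 1) * (Yᵀ * C)).trace := by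
    rw [Matrix.mul_assoc]
  rw [e1, e2, e3, e4]; ring

lemma amap_fderiv {n p : ℕ} (Y : Matrix (Fin n) (Fin p) ℝ) :
    HasFDerivAt (fun Z : Matrix (Fin n) (Fin p) ℝ => Z * Amap Z)
      ((mulLeftCLM Y).comp
          (-((1 / 2 : ℝ) •
            ((mulLeftCLM Yᵀ).comp (ContinuousLinearMap.id ℝ _) +
              (mulRightCLM Y).comp (tCLM.comp (ContinuousLinearMap.id ℝ _))))) +
        (mulRightCLM (Amap Y)).comp (ContinuousLinearMap.id ℝ _)) Y := by
  have hid : HasFDerivAt (fun Z : Matrix (Fin n) (Fin p) ℝ => Z)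
      (ContinuousLinearMap.id ℝ _) Y := hasFDerivAt_id Y
  have hA : HasFDerivAt (fun Z : Matrix (Fin n) (Fin p) ℝ => Amap Z) _ Y :=
    HasFDerivAt.const_sub (((HasFDerivAt.matmul (HasFDerivAt.mtrans hid) hid)).const_smul
      (1 / 2 : ℝ)) ((3 / 2 : ℝ) • (1 : Matrix (Fin p) (Fin p) ℝ))
  exact HasFDerivAt.matmul hid hA

lemma g_grad {n p : ℕ} (f : Matrix (Fin n) (Fin p) ℝ → ℝ)
    (gradf : Matrix (Fin n) (Fin p) ℝ → Matrix (Fin n) (Fin p) ℝ)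
    (hgradf : ∀ Y, HasFDerivAt f (dualCLM (gradf Y)) Y) (Y : Matrix (Fin n) (Fin p) ℝ) :
    HasFDerivAt (g f)
      (dualCLM ((3 / 2 : ℝ) • gradf (Y * Amap Y) -
        (1 / 2 : ℝ) • (gradf (Y * Amap Y) * (Yᵀ * Y) + Y * (gradf (Y * Amap Y))ᵀ * Y +
          Y * Yᵀ * gradf (Y * Amap Y)))) Y := by
  refine HasFDerivAt.congr_fderiv ((hgradf (Y * Amap Y)).comp Y (amap_fderiv Y)) ?_
  ext C
  set G := gradf (Y * Amap Y) with hG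
  change (Gᵀ * (Y * (-((1 / 2 : ℝ) • (Yᵀ * C + Cᵀ * Y))) + C * Amap Y)).trace
    = (((3 / 2 : ℝ) • G - (1 / 2 : ℝ) • (G * (Yᵀ * Y) + Y * Gᵀ * Y + Y * Yᵀ * G))ᵀ * C).trace
  simp only [Amap, Matrix.mul_sub, Matrix.sub_mul, Matrix.mul_smul, Matrix.smul_mul,
    Matrix.mul_neg, Matrix.neg_mul, Matrix.mul_add, Matrix.add_mul, Matrix.mul_one,
    Matrix.transpose_sub, Matrix.transpose_add, Matrix.transpose_smul, Matrix.transpose_mul,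
    Matrix.transpose_transpose, Matrix.trace_add, Matrix.trace_sub, Matrix.trace_smul,
    Matrix.trace_neg, smul_eq_mul]
  have m1 : (Gᵀ * (Y * (Yᵀ * C))).trace = (Gᵀ * (Y * Yᵀ) * C).trace := by
    simp only [Matrix.mul_assoc]
  have m3 : (Gᵀ * (C * (Yᵀ * Y))).trace = (Yᵀ * Y * Gᵀ * C).trace := by
    rw [rot3, rot3]; simp only [Matrix.mul_assoc]
  have m2 : (Gᵀ * (Y * (Cᵀ * Y))).trace = (Yᵀ * (G * Yᵀ) * C).trace := by
    have t := transp4 Gᵀ Y Cᵀ Y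
    simp only [Matrix.transpose_transpose] at t
    rw [t, rot4, rot4]
    simp only [Matrix.mul_assoc]
  rw [m1, m2, m3]; ring

theorem statement_8 {n p : ℕ} (f : Matrix (Fin n) (Fin p) ℝ → ℝ) (β : ℝ)
    (gradf gradh : Matrix (Fin n) (Fin p) ℝ → Matrix (Fin n) (Fin p) ℝ)
    (Hf : Matrix (Fin n) (Fin p) ℝ → Matrix (Fin n) (Fin p) ℝ →L[ℝ] Matrix (Fin n) (Fin p) ℝ)
    (hgradf : ∀ Y, HasGradAt f Y (gradf Y))
    (hHf : ∀ Y, HasFDerivAt gradf (Hf Y) Y)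
    (hHfCont : Continuous Hf)
    (hgradh : ∀ Y, HasGradAt (hpen f β) Y (gradh Y))
    (X : Matrix (Fin n) (Fin p) ℝ) (hX : Xᵀ * X = 1)
    (D : Matrix (Fin n) (Fin p) ℝ) (hD : Phi (Dᵀ * X) = 0)
    (Hh : Matrix (Fin n) (Fin p) ℝ →L[ℝ] Matrix (Fin n) (Fin p) ℝ)
    (hHh : HasFDerivAt gradh Hh X) :
    finner D (Hh D) = finner D (Hf X D - D * Phi (Xᵀ * gradf X)) := by
  classical
  -- explicit gradient of hpen
  have hEg : ∀ Y : Matrix (Fin n) (Fin p) ℝ, HasFDerivAt (hpen f β)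
      (dualCLM ((3 / 2 : ℝ) • gradf (Y * Amap Y) -
        (1 / 2 : ℝ) • (gradf (Y * Amap Y) * (Yᵀ * Y) + Y * (gradf (Y * Amap Y))ᵀ * Y +
          Y * Yᵀ * gradf (Y * Amap Y)) + β • (Y * (Yᵀ * Y - 1)))) Y := by
    intro Y
    have h3 := (g_grad f gradf hgradf Y).add (pen_grad β Y)
    exact h3.congr_fderiv (dual_add _ _).symm
  have hgr : gradh = fun Y =>
      (3 / 2 : ℝ) • gradf (Y * Amap Y) -
        (1 / 2 : ℝ) • (gradf (Y * Amap Y) * (Yᵀ * Y) + Y * (gradf (Y * Amap Y))ᵀ * Y +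
          Y * Yᵀ * gradf (Y * Amap Y)) + β • (Y * (Yᵀ * Y - 1)) := funext fun Y => dual_inj
    (HasFDerivAt.unique (show HasFDerivAt (hpen f β) (dualCLM (gradh Y)) Y from hgradh Y)
      (hEg Y))
  have hid : HasFDerivAt (fun Z : Matrix (Fin n) (Fin p) ℝ => Z)
      (ContinuousLinearMap.id ℝ _) X := hasFDerivAt_id X
  have hGF : HasFDerivAt (fun Z : Matrix (Fin n) (Fin p) ℝ => gradf (Z * Amap Z)) _ X :=
    (hHf (X * Amap X)).comp X (amap_fderiv X)
  have hR : HasFDerivAt (fun Z : Matrix (Fin n) (Fin p) ℝ => Zᵀ * Z - 1) _ X :=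
    (HasFDerivAt.matmul (HasFDerivAt.mtrans hid) hid).sub_const 1
  have hEd0 := (((hGF.const_smul (3/2:ℝ)).sub
      ((((HasFDerivAt.matmul hGF (HasFDerivAt.matmul (HasFDerivAt.mtrans hid) hid)).add
         (HasFDerivAt.matmul (HasFDerivAt.matmul hid (HasFDerivAt.mtrans hGF)) hid)).add
         (HasFDerivAt.matmul (HasFDerivAt.matmul hid (HasFDerivAt.mtrans hid)) hGF)).const_smul
           (1/2:ℝ))).add
      ((HasFDerivAt.matmul hid hR).const_smul β))
  rw [hgr] at hHh
  have hHu := HasFDerivAt.unique hHh hEd0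
  have hAone : Amap X = 1 := by
    rw [Amap, hX, ← sub_smul]; norm_num
  have hXA : X * Amap X = X := by rw [hAone, Matrix.mul_one]
  have hsum : Dᵀ * X + Xᵀ * D = 0 := by
    have h0 := hD
    rw [Phi] at h0
    rw [Matrix.transpose_mul, Matrix.transpose_transpose] at h0
    have := smul_eq_zero.mp h0
    rcases this with h | h
    · norm_num at h
    · exact h
  have hDX : Dᵀ * X = -(Xᵀ * D) := eq_neg_of_add_eq_zero_left hsum
  have happ : Hh D = Hh D := rfl
  rw [hHu]
  change finner D ((3 / 2 : ℝ) • (Hf (X * Amap X)) (X * (-((1 / 2 : ℝ) • (Xᵀ * D + Dᵀ * X)))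
      + D * Amap X) -
    (1 / 2 : ℝ) • ((gradf (X * Amap X) * (Xᵀ * D + Dᵀ * X) + (Hf (X * Amap X)) (X * (-((1 / 2 : ℝ)
      • (Xᵀ * D + Dᵀ * X))) + D * Amap X) * (Xᵀ * X) +
      (X * (gradf (X * Amap X))ᵀ * D + (X * ((Hf (X * Amap X)) (X * (-((1 / 2 : ℝ)
      • (Xᵀ * D + Dᵀ * X))) + D * Amap X))ᵀ + D * (gradf (X * Amap X))ᵀ) * X)) +
      (X * Xᵀ * (Hf (X * Amap X)) (X * (-((1 / 2 : ℝ) • (Xᵀ * D + Dᵀ * X))) + D * Amap X) +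
      (X * Dᵀ + D * Xᵀ) * gradf (X * Amap X))) +
    β • (X * (Xᵀ * D + Dᵀ * X) + D * (Xᵀ * X - 1))) = _
  have hsum' : Xᵀ * D + Dᵀ * X = 0 := by rw [add_comm]; exact hsum
  simp only [hXA, hAone, hX, hsum', smul_zero, neg_zero, Matrix.mul_zero, Matrix.zero_mul,
    add_zero, zero_add, Matrix.mul_one, mul_one, sub_self, Matrix.zero_mul, smul_zero]
  simp only [finner, Phi, Matrix.mul_add, Matrix.add_mul, Matrix.mul_smul, Matrix.smul_mul,
    Matrix.mul_sub, Matrix.sub_mul, Matrix.trace_add, Matrix.trace_sub, Matrix.trace_smul,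
    smul_eq_mul, Matrix.mul_assoc, Matrix.transpose_mul, Matrix.transpose_transpose]
  have e1 : (Dᵀ * (X * (((Hf X) D)ᵀ * X))).trace = (Xᵀ * ((Hf X) D * (Xᵀ * D))).trace := by
    have t := transp4 Dᵀ X ((Hf X) D)ᵀ X
    simpa only [Matrix.transpose_transpose] using t
  have e2 : (Dᵀ * (X * (Xᵀ * (Hf X) D))).trace = -(Xᵀ * ((Hf X) D * (Xᵀ * D))).trace := by
    conv_lhs => rw [rot4, rot4, hDX]
    simp only [Matrix.mul_neg, Matrix.trace_neg]
  have e3 : (Dᵀ * (X * ((gradf X)ᵀ * D))).trace = -((gradf X)ᵀ * (D * (Xᵀ * D))).trace := by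
    conv_lhs => rw [rot4, rot4, hDX]
    simp only [Matrix.mul_neg, Matrix.trace_neg]
  have e4 : (Dᵀ * (X * (Dᵀ * gradf X))).trace = ((gradf X)ᵀ * (D * (Xᵀ * D))).trace := by
    have t := transp4 Dᵀ X Dᵀ (gradf X)
    simpa only [Matrix.transpose_transpose] using t
  rw [e1, e2, e3, e4]; ring

end ExPen
end
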